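/- If σ is an n×n Hermitian unitary matrix anticommuting with Σ = diag(I_{m_+}, 0, −I_{m_-}), then necessarily m_+ = m_- = (n−1)/2, and σ has the anti-block-diagonal form with blocks σ_{+-} and σ_{-+} (in the corner positions) that are unitary and adjoints of each other, with middle entry σ_{00} = ±1 and all other blocks zero. -/

import Mathlib

open Matrix

/-- if `σ` is an `n × n` Hermitian unitary matrix anticommuting with
`Σ = diag(I_{m₊}, 0, −I_{m₋})` (so `n = m₊ + 1 + m₋`), then necessarily
`m₊ = m₋ = (n−1)/2`, and `σ` has the anti-block-diagonal form with corner blocks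
`σ₊₋` and `σ₋₊` that are unitary and adjoints of each other, middle entry
`σ₀₀ = ±1`, and all other blocks zero. -/
theorem hermitian_unitary_anticommuting_is_antidiagonal
    (mp mm : ℕ) (hmp : 1 ≤ mp) (hmm : 1 ≤ mm)
    (Sigma σ : Matrix (Fin (mp + 1 + mm)) (Fin (mp + 1 + mm)) ℂ)
    (hSigma : Sigma = Matrix.diagonal
      (fun i => if i.val < mp then 1 else if i.val = mp then 0 else -1))
    (hherm : σᴴ = σ) (hunit : σ * σᴴ = 1) (hanticomm : σ * Sigma = -(Sigma * σ)) :
    -- the sizes of the two blocks must coincide: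
    mp = mm ∧
    -- all blocks other than the two corner blocks and the middle entry vanish:
    (∀ i j : Fin (mp + 1 + mm),
      ¬(i.val < mp ∧ mp < j.val) → ¬(mp < i.val ∧ j.val < mp) →
      ¬(i.val = mp ∧ j.val = mp) → σ i j = 0) ∧
    -- σ₋₊ is the adjoint of σ₊₋:
    ((Matrix.of fun i j => σ ⟨mp + 1 + i.val, by omega⟩ ⟨j.val, by omega⟩ :
        Matrix (Fin mm) (Fin mp) ℂ)
      = (Matrix.of fun i j => σ ⟨i.val, by omega⟩ ⟨mp + 1 + j.val, by omega⟩ :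
        Matrix (Fin mp) (Fin mm) ℂ)ᴴ) ∧
    -- σ₊₋ is unitary:
    ((Matrix.of fun i j => σ ⟨i.val, by omega⟩ ⟨mp + 1 + j.val, by omega⟩ :
        Matrix (Fin mp) (Fin mm) ℂ) *
      (Matrix.of fun i j => σ ⟨i.val, by omega⟩ ⟨mp + 1 + j.val, by omega⟩ :
        Matrix (Fin mp) (Fin mm) ℂ)ᴴ = 1 ∧
     (Matrix.of fun i j => σ ⟨i.val, by omega⟩ ⟨mp + 1 + j.val, by omega⟩ :
        Matrix (Fin mp) (Fin mm) ℂ)ᴴ *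
      (Matrix.of fun i j => σ ⟨i.val, by omega⟩ ⟨mp + 1 + j.val, by omega⟩ :
        Matrix (Fin mp) (Fin mm) ℂ) = 1) ∧
    -- the middle entry σ₀₀ is ±1:
    (σ ⟨mp, by omega⟩ ⟨mp, by omega⟩ = 1 ∨ σ ⟨mp, by omega⟩ ⟨mp, by omega⟩ = -1) := by
  -- diagonal entries of Sigma
  set d : Fin (mp + 1 + mm) → ℂ :=
    fun i => if i.val < mp then 1 else if i.val = mp then 0 else -1 with hd
  -- anticommutation entrywise
  have key : ∀ i j, σ i j * (d j + d i) = 0 := by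
    intro i j
    have h := congrFun (congrFun hanticomm i) j
    rw [hSigma] at h
    simp only [mul_diagonal, diagonal_mul, Matrix.neg_apply] at h
    rw [mul_add, h]
    ring
  -- vanishing of all blocks outside the corners and the middle entry
  have hz : ∀ i j : Fin (mp + 1 + mm),
      ¬(i.val < mp ∧ mp < j.val) → ¬(mp < i.val ∧ j.val < mp) →
      ¬(i.val = mp ∧ j.val = mp) → σ i j = 0 := by
    intro i j h1 h2 h3
    have hk := key i j
    have hne : d j + d i ≠ 0 := by
      simp only [hd]
      split_ifs <;> first | (exfalso; omega) | norm_num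
    exact (mul_eq_zero.mp hk).resolve_right hne
  -- hermiticity entrywise
  have hsym : ∀ i j, (starRingEnd ℂ) (σ j i) = σ i j := by
    intro i j
    have := congrFun (congrFun hherm i) j
    simpa [conjTranspose_apply] using this
  have hunit' : σᴴ * σ = 1 := by rw [hherm] at hunit ⊢; exact hunit
  -- sum splitting over the three blocks
  have hsplit : ∀ f : Fin (mp + 1 + mm) → ℂ,
      ∑ k, f k = (∑ k : Fin mp, f ⟨k.val, by omega⟩) + f ⟨mp, by omega⟩ +
        ∑ k : Fin mm, f ⟨mp + 1 + k.val, by omega⟩ := by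
    intro f
    rw [Fin.sum_univ_add, Fin.sum_univ_add, Fin.sum_univ_one]
    rfl
  set A : Matrix (Fin mp) (Fin mm) ℂ :=
    Matrix.of fun i j => σ ⟨i.val, by omega⟩ ⟨mp + 1 + j.val, by omega⟩ with hA
  -- A Aᴴ = 1
  have hAAH : A * Aᴴ = 1 := by
    ext i j
    have h := congrFun (congrFun hunit ⟨i.val, by omega⟩) ⟨j.val, by omega⟩
    rw [mul_apply, hsplit] at h
    have z1 : (∑ k : Fin mp, σ ⟨i.val, by omega⟩ ⟨k.val, by omega⟩ *
        σᴴ ⟨k.val, by omega⟩ ⟨j.val, by omega⟩) = 0 := by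
      refine Finset.sum_eq_zero fun k _ => ?_
      have hzz : σ (⟨i.val, by omega⟩ : Fin (mp + 1 + mm)) ⟨k.val, by omega⟩ = 0 :=
        hz _ _ (by simp only [not_and, Fin.mk.injEq]; omega) (by simp only [not_and, Fin.mk.injEq]; omega) (by simp only [not_and, Fin.mk.injEq]; omega)
      rw [hzz, zero_mul]
    have z2 : σ (⟨i.val, by omega⟩ : Fin (mp + 1 + mm)) ⟨mp, by omega⟩ = 0 :=
      hz _ _ (by simp only [not_and, Fin.mk.injEq]; omega) (by simp only [not_and, Fin.mk.injEq]; omega) (by simp only [not_and, Fin.mk.injEq]; omega)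
    rw [z1, z2] at h
    simp only [zero_mul, zero_add, conjTranspose_apply, one_apply, Fin.mk.injEq] at h
    rw [mul_apply]
    simp only [hA, conjTranspose_apply, of_apply, one_apply, Fin.ext_iff]
    exact h
  -- Aᴴ A = 1
  have hAHA : Aᴴ * A = 1 := by
    ext i j
    have h := congrFun (congrFun hunit' ⟨mp + 1 + i.val, by omega⟩) ⟨mp + 1 + j.val, by omega⟩
    rw [mul_apply, hsplit] at h
    have z2 : σ (⟨mp, by omega⟩ : Fin (mp + 1 + mm)) ⟨mp + 1 + j.val, by omega⟩ = 0 :=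
      hz _ _ (by simp only [not_and, Fin.mk.injEq]; omega) (by simp only [not_and, Fin.mk.injEq]; omega) (by simp only [not_and, Fin.mk.injEq]; omega)
    have z3 : (∑ k : Fin mm, σᴴ ⟨mp + 1 + i.val, by omega⟩ ⟨mp + 1 + k.val, by omega⟩ *
        σ ⟨mp + 1 + k.val, by omega⟩ ⟨mp + 1 + j.val, by omega⟩) = 0 := by
      refine Finset.sum_eq_zero fun k _ => ?_
      have hzz : σ (⟨mp + 1 + k.val, by omega⟩ : Fin (mp + 1 + mm))
          ⟨mp + 1 + j.val, by omega⟩ = 0 :=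
        hz _ _ (by simp only [not_and, Fin.mk.injEq]; omega) (by simp only [not_and, Fin.mk.injEq]; omega) (by simp only [not_and, Fin.mk.injEq]; omega)
      rw [hzz, mul_zero]
    rw [z3] at h
    rw [conjTranspose_apply, z2] at h
    simp only [map_zero, zero_mul, mul_zero, add_zero, conjTranspose_apply, one_apply,
      Fin.mk.injEq, add_right_inj] at h
    rw [mul_apply]
    simp only [hA, conjTranspose_apply, of_apply, one_apply, Fin.ext_iff]
    exact h
  -- mp = mm via traces
  have hcard : mp = mm := by
    have ht := Matrix.trace_mul_comm A Aᴴ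
    rw [hAAH, hAHA, Matrix.trace_one, Matrix.trace_one] at ht
    simp only [Fintype.card_fin] at ht
    exact_mod_cast ht
  refine ⟨hcard, hz, ?_, ⟨hAAH, hAHA⟩, ?_⟩
  · ext i j
    simp only [of_apply, conjTranspose_apply]
    exact (hsym _ _).symm
  · have h := congrFun (congrFun hunit ⟨mp, by omega⟩) ⟨mp, by omega⟩
    rw [mul_apply, hsplit] at h
    have z1 : (∑ k : Fin mp, σ ⟨mp, by omega⟩ ⟨k.val, by omega⟩ *
        σᴴ ⟨k.val, by omega⟩ ⟨mp, by omega⟩) = 0 := by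
      refine Finset.sum_eq_zero fun k _ => ?_
      have hzz : σ (⟨mp, by omega⟩ : Fin (mp + 1 + mm)) ⟨k.val, by omega⟩ = 0 :=
        hz _ _ (by simp only [not_and, Fin.mk.injEq]; omega) (by simp only [not_and, Fin.mk.injEq]; omega) (by simp only [not_and, Fin.mk.injEq]; omega)
      rw [hzz, zero_mul]
    have z3 : (∑ k : Fin mm, σ ⟨mp, by omega⟩ ⟨mp + 1 + k.val, by omega⟩ *
        σᴴ ⟨mp + 1 + k.val, by omega⟩ ⟨mp, by omega⟩) = 0 := by
      refine Finset.sum_eq_zero fun k _ => ?_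
      have hzz : σ (⟨mp, by omega⟩ : Fin (mp + 1 + mm)) ⟨mp + 1 + k.val, by omega⟩ = 0 :=
        hz _ _ (by simp only [not_and, Fin.mk.injEq]; omega) (by simp only [not_and, Fin.mk.injEq]; omega) (by simp only [not_and, Fin.mk.injEq]; omega)
      rw [hzz, zero_mul]
    rw [z1, z3] at h
    simp only [zero_add, add_zero, conjTranspose_apply, one_apply_eq] at h
    rw [← starRingEnd_apply, hsym] at h
    exact mul_self_eq_one_iff.mp h
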